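/- Let D be a design of strength R−1 (R ≥ 2) with n ≥ R factors, each factor given a normalized orthogonal coding, let U be an R-element set of factors, c ∈ U, and C = U ∖ {c}. Separately, give each factor i an arbitrary coding B_i : Fin (s i) → Fin (s i − 1) → ℝ such that the s i × s i matrix whose first column is all ones and whose remaining columns are l ↦ B_i l j is invertible; let Y be the column-centered main-effects model matrix of c built from B_c (entries B_c (D r c) j, each column shifted to sum to zero) and let X consist of the column-centered nonconstant columns of the full model matrix of C built from the codings B_i (i ∈ C). If the Gram matrices S_yy = YᵀY and S_xx = XᵀX are invertible, then the sum of the squared canonical correlations of (Y, X), namely tr(S_yy⁻¹ S_yx S_xx⁻¹ S_xy) with S_yx = YᵀX = S_xyᵀ, equals the projection frequency a_R(U) computed from the normalized orthogonal codings. -/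

import Mathlib

open Finset Matrix

/-- A design `D` (rows = runs, coordinates = factors) has strength `t` if in every
projection onto `t` factors every level combination occurs equally often. -/
def hasStrength {N n : ℕ} (s : Fin n → ℕ) (D : Fin N → ∀ i, Fin (s i)) (t : ℕ) : Prop :=
  ∀ T : Finset (Fin n), T.card = t → ∀ x : ∀ i, Fin (s i),
    (Finset.univ.filter fun r => ∀ i ∈ T, D r i = x i).card = N / ∏ i ∈ T, s i

/-- Normalized orthogonal coding: contrast columns have zero sum and
`Cᵀ C = m • 1` (squared length `m`, pairwise orthogonal). -/
def isNOC {m : ℕ} (C : Fin m → Fin (m - 1) → ℝ) : Prop :=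
  (∀ j, ∑ l, C l j = 0) ∧
    ∀ j j', ∑ l, C l j * C l j' = if j = j' then (m : ℝ) else 0

/-- Column (indexed by the tuple `j`) of the interaction model matrix of the set `U`
of factors, evaluated at run `r`. -/
def intCol {N n : ℕ} {s : Fin n → ℕ} (C : ∀ i, Fin (s i) → Fin (s i - 1) → ℝ)
    (D : Fin N → ∀ i, Fin (s i)) (U : Finset (Fin n))
    (j : ∀ i : U, Fin (s i.1 - 1)) (r : Fin N) : ℝ :=
  ∏ i : U, C i.1 (D r i.1) (j i)

/-- Projection frequency `a_k(U)`: sum of squared column sums of the interaction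
model matrix of `U`, divided by `N²`. -/
noncomputable def projFreq {N n : ℕ} {s : Fin n → ℕ}
    (C : ∀ i, Fin (s i) → Fin (s i - 1) → ℝ)
    (D : Fin N → ∀ i, Fin (s i)) (U : Finset (Fin n)) : ℝ :=
  (∑ j : ∀ i : U, Fin (s i.1 - 1), (∑ r, intCol C D U j r) ^ 2) / (N : ℝ) ^ 2

/-- Column-centering of a matrix with `N` rows. -/
noncomputable def center {N : ℕ} {κ : Type*} (M : Matrix (Fin N) κ ℝ) :
    Matrix (Fin N) κ ℝ :=
  Matrix.of fun r k => M r k - (∑ r', M r' k) / (N : ℝ)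

/-- Index type for the nonconstant columns of the full model matrix of `Cset`:
one column for each tuple of contrasts of each nonempty subset of `Cset`. -/
abbrev FullIdx {n : ℕ} (s : Fin n → ℕ) (Cset : Finset (Fin n)) : Type :=
  Σ S : {S : Finset (Fin n) // S ⊆ Cset ∧ S.Nonempty}, ∀ i : S.1, Fin (s i.1 - 1)

/-- Column-centered main-effects model matrix of factor `c` (coding `B`). -/
noncomputable def Ymat {N n : ℕ} {s : Fin n → ℕ} (B : ∀ i, Fin (s i) → Fin (s i - 1) → ℝ)
    (D : Fin N → ∀ i, Fin (s i)) (c : Fin n) : Matrix (Fin N) (Fin (s c - 1)) ℝ :=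
  center (Matrix.of fun r j => B c (D r c) j)

/-- Column-centered nonconstant columns of the full model matrix of `Cset` (coding `B`). -/
noncomputable def Xmat {N n : ℕ} {s : Fin n → ℕ} (B : ∀ i, Fin (s i) → Fin (s i - 1) → ℝ)
    (D : Fin N → ∀ i, Fin (s i)) (Cset : Finset (Fin n)) :
    Matrix (Fin N) (FullIdx s Cset) ℝ :=
  center (Matrix.of fun r k => intCol B D k.1.1 k.2 r)


namespace St6

variable {N n R : ℕ} {s : Fin n → ℕ}

lemma prod_subtype_eq {V : Finset (Fin n)} (F : ∀ i : V, ℝ) :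
    ∏ i : V, F i = ∏ a ∈ V, (if h : a ∈ V then F ⟨a, h⟩ else 1) := by
  rw [← Finset.prod_attach V (fun a => if h : a ∈ V then F ⟨a, h⟩ else 1),
      Finset.univ_eq_attach]
  exact Finset.prod_congr rfl fun x _ => by simp [x.2]

lemma prod_dite_subset {S V : Finset (Fin n)} (hSV : S ⊆ V) (g : ∀ i : S, ℝ) :
    (∏ a ∈ V, if h : a ∈ S then g ⟨a, h⟩ else 1) = ∏ i : S, g i := by
  rw [prod_subtype_eq (V := S) g]
  exact (Finset.prod_subset hSV fun x _ hx => by simp [hx]).symm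

/-- Master counting lemma. -/
lemma master {t : ℕ} (D : Fin N → ∀ i, Fin (s i)) (hD : hasStrength s D t)
    (hs : ∀ i, 2 ≤ s i) {T : Finset (Fin n)} (hT : T.card = t)
    (f : ∀ i, Fin (s i) → ℝ) :
    ∑ r, ∏ i ∈ T, f i (D r i) =
      ((N / ∏ i ∈ T, s i : ℕ) : ℝ) * ∏ i ∈ T, (∑ l, f i l) := by
  classical
  have key := (Fintype.sum_fiberwise (fun r : Fin N => (fun i : T => D r i.1))
    (fun r => ∏ i ∈ T, f i (D r i))).symm
  rw [key]
  have step1 : ∀ x : (∀ i : T, Fin (s i.1)),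
      (∑ r : {r : Fin N // (fun i : T => D r i.1) = x}, ∏ i ∈ T, f i (D r.1 i))
        = ((N / ∏ i ∈ T, s i : ℕ) : ℝ) * ∏ i ∈ T, (if h : i ∈ T then f i (x ⟨i, h⟩) else 1) := by
    intro x
    have hconst : ∀ r : {r : Fin N // (fun i : T => D r i.1) = x},
        ∏ i ∈ T, f i (D r.1 i) = ∏ i ∈ T, (if h : i ∈ T then f i (x ⟨i, h⟩) else 1) := by
      rintro ⟨r, hr⟩
      refine Finset.prod_congr rfl fun i hi => ?_
      have : D r i = x ⟨i, hi⟩ := congrFun hr ⟨i, hi⟩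
      simp [this, hi]
    rw [Finset.sum_congr rfl (fun r _ => hconst r), Finset.sum_const, nsmul_eq_mul]
    congr 2
    -- card of the fiber
    set hx' : ∀ i, Fin (s i) := fun i => if h : i ∈ T then x ⟨i, h⟩ else ⟨0, by have := hs i; omega⟩ with hhx'
    have hcard := hD T hT hx'
    rw [Finset.card_univ, Fintype.card_subtype, ← hcard]
    congr 1
    apply Finset.filter_congr
    intro r _
    constructor
    · intro h i hi
      have := congrFun h ⟨i, hi⟩
      simpa [hhx', hi] using this
    · intro h
      funext i
      simpa [hhx', i.2] using h i.1 i.2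
  rw [Finset.sum_congr rfl (fun x _ => step1 x), ← Finset.mul_sum]
  congr 1
  have : ∀ x : (∀ i : T, Fin (s i.1)),
      (∏ i ∈ T, if h : i ∈ T then f i (x ⟨i, h⟩) else 1) = ∏ i : T, f i.1 (x i) :=
    fun x => (prod_subtype_eq (fun i : T => f i.1 (x i))).symm
  rw [Finset.sum_congr rfl (fun x _ => this x)]
  rw [← Finset.prod_coe_sort T (fun i => ∑ l, f i l)]
  rw [Finset.prod_univ_sum (fun _ => Finset.univ) (fun (i : T) (l : Fin (s i.1)) => f i.1 l)]
  rw [Fintype.piFinset_univ]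

/-- all products equal to per-factor sums = s i give total N -/
lemma sum_prod_eq_N (hRn : R - 1 ≤ n) (D : Fin N → ∀ i, Fin (s i))
    (hD : hasStrength s D (R - 1)) (hs : ∀ i, 2 ≤ s i)
    {S : Finset (Fin n)} (hS : S.card ≤ R - 1) (f : ∀ i, Fin (s i) → ℝ)
    (hf : ∀ i ∈ S, ∑ l, f i l = (s i : ℝ)) :
    ∑ r, ∏ i ∈ S, f i (D r i) = (N : ℝ) := by
  classical
  obtain ⟨T, hST, -, hT⟩ := Finset.exists_subsuperset_card_eq (Finset.subset_univ S) hS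
    (by simpa using hRn)
  set g : ∀ i, Fin (s i) → ℝ := fun i l => if i ∈ S then f i l else 1 with hg
  have h1 : ∀ r, ∏ i ∈ S, f i (D r i) = ∏ i ∈ T, g i (D r i) := by
    intro r
    calc ∏ i ∈ S, f i (D r i) = ∏ i ∈ S, g i (D r i) :=
          Finset.prod_congr rfl fun i hi => by simp [hg, hi]
      _ = ∏ i ∈ T, g i (D r i) :=
          Finset.prod_subset hST fun x _ hx => by simp [hg, hx]
  have h2 := master D hD hs hT g
  have h3 := master D hD hs hT (fun i (_ : Fin (s i)) => (1 : ℝ))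
  have hgs : ∀ i ∈ T, ∑ l, g i l = (s i : ℝ) := by
    intro i _
    by_cases hi : i ∈ S
    · simp only [hg, hi, if_true]; exact hf i hi
    · simp [hg, hi]
  have h4 : ∏ i ∈ T, (∑ l, g i l) = ∏ i ∈ T, (s i : ℝ) :=
    Finset.prod_congr rfl hgs
  simp only [h1]
  rw [h2, h4]
  have : (∑ r : Fin N, ∏ i ∈ T, (1:ℝ)) = (N : ℝ) := by simp
  rw [← this, h3]
  simp

/-- a zero-sum factor kills the sum -/
lemma sum_prod_eq_zero (hRn : R - 1 ≤ n) (D : Fin N → ∀ i, Fin (s i))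
    (hD : hasStrength s D (R - 1)) (hs : ∀ i, 2 ≤ s i)
    {S : Finset (Fin n)} (hS : S.card ≤ R - 1) (f : ∀ i, Fin (s i) → ℝ)
    (hf : ∃ i ∈ S, ∑ l, f i l = 0) :
    ∑ r, ∏ i ∈ S, f i (D r i) = 0 := by
  classical
  obtain ⟨T, hST, -, hT⟩ := Finset.exists_subsuperset_card_eq (Finset.subset_univ S) hS
    (by simpa using hRn)
  set g : ∀ i, Fin (s i) → ℝ := fun i l => if i ∈ S then f i l else 1 with hg
  have h1 : ∀ r, ∏ i ∈ S, f i (D r i) = ∏ i ∈ T, g i (D r i) := by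
    intro r
    calc ∏ i ∈ S, f i (D r i) = ∏ i ∈ S, g i (D r i) :=
          Finset.prod_congr rfl fun i hi => by simp [hg, hi]
      _ = ∏ i ∈ T, g i (D r i) :=
          Finset.prod_subset hST fun x _ hx => by simp [hg, hx]
  simp only [h1]
  rw [master D hD hs hT g]
  obtain ⟨i₀, hi₀, h0⟩ := hf
  have : ∏ i ∈ T, (∑ l, g i l) = 0 := by
    refine Finset.prod_eq_zero (hST hi₀) ?_
    simp only [hg, hi₀, if_true]; exact h0
  rw [this, mul_zero]


/-- augmented coding matrix: first column all-ones. -/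
def Aug {m : ℕ} (f : Fin m → Fin (m - 1) → ℝ) : Matrix (Fin m) (Option (Fin (m - 1))) ℝ :=
  Matrix.of fun l o => o.elim 1 fun j => f l j

lemma Aug_none {m : ℕ} (f : Fin m → Fin (m - 1) → ℝ) (l : Fin m) : Aug f l none = 1 := rfl
lemma Aug_some {m : ℕ} (f : Fin m → Fin (m - 1) → ℝ) (l : Fin m) (j : Fin (m-1)) :
    Aug f l (some j) = f l j := rfl

/-- inverse matrix of a rectangular matrix with bijective `mulVecLin` -/
noncomputable def minv {k m : Type} [Fintype k] [Fintype m] [DecidableEq k] [DecidableEq m]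
    (A : Matrix m k ℝ) (hA : Function.Bijective A.mulVecLin) : Matrix k m ℝ :=
  LinearMap.toMatrix' ((LinearEquiv.ofBijective A.mulVecLin hA).symm : (m → ℝ) →ₗ[ℝ] (k → ℝ))

lemma minv_mul {k m : Type} [Fintype k] [Fintype m] [DecidableEq k] [DecidableEq m]
    (A : Matrix m k ℝ) (hA : Function.Bijective A.mulVecLin) :
    minv A hA * A = 1 := by
  have h : (minv A hA * A).mulVecLin = (1 : Matrix k k ℝ).mulVecLin := by
    rw [Matrix.mulVecLin_mul, Matrix.mulVecLin_one]
    apply LinearMap.ext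
    intro x
    have : (minv A hA).mulVecLin = ((LinearEquiv.ofBijective A.mulVecLin hA).symm :
        (m → ℝ) →ₗ[ℝ] (k → ℝ)) := Matrix.toLin'_toMatrix' _
    simp only [LinearMap.comp_apply, this, LinearMap.id_apply]
    exact (LinearEquiv.ofBijective A.mulVecLin hA).symm_apply_apply x
  calc minv A hA * A = LinearMap.toMatrix' (minv A hA * A).mulVecLin := by
        rw [show (minv A hA * A).mulVecLin = Matrix.toLin' (minv A hA * A) from rfl,
          LinearMap.toMatrix'_toLin']
    _ = LinearMap.toMatrix' (1 : Matrix k k ℝ).mulVecLin := by rw [h]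
    _ = 1 := by
        rw [show (1 : Matrix k k ℝ).mulVecLin = Matrix.toLin' 1 from rfl,
          LinearMap.toMatrix'_toLin']

lemma mul_minv {k m : Type} [Fintype k] [Fintype m] [DecidableEq k] [DecidableEq m]
    (A : Matrix m k ℝ) (hA : Function.Bijective A.mulVecLin) :
    A * minv A hA = 1 := by
  have h : (A * minv A hA).mulVecLin = (1 : Matrix m m ℝ).mulVecLin := by
    rw [Matrix.mulVecLin_mul, Matrix.mulVecLin_one]
    apply LinearMap.ext
    intro x
    have : (minv A hA).mulVecLin = ((LinearEquiv.ofBijective A.mulVecLin hA).symm :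
        (m → ℝ) →ₗ[ℝ] (k → ℝ)) := Matrix.toLin'_toMatrix' _
    simp only [LinearMap.comp_apply, this, LinearMap.id_apply]
    exact (LinearEquiv.ofBijective A.mulVecLin hA).apply_symm_apply x
  calc A * minv A hA = LinearMap.toMatrix' (A * minv A hA).mulVecLin := by
        rw [show (A * minv A hA).mulVecLin = Matrix.toLin' (A * minv A hA) from rfl,
          LinearMap.toMatrix'_toLin']
    _ = LinearMap.toMatrix' (1 : Matrix m m ℝ).mulVecLin := by rw [h]
    _ = 1 := by
        rw [show (1 : Matrix m m ℝ).mulVecLin = Matrix.toLin' 1 from rfl,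
          LinearMap.toMatrix'_toLin']

/-- the augmented matrix of a NOC coding has bijective `mulVecLin`. -/
lemma Aug_bijective {m : ℕ} (hm : 2 ≤ m) {f : Fin m → Fin (m - 1) → ℝ} (hf : isNOC f) :
    Function.Bijective (Aug f).mulVecLin := by
  have hG : ((m : ℝ)⁻¹ • (Aug f)ᵀ) * (Aug f) = 1 := by
    have hm0 : (m : ℝ) ≠ 0 := by positivity
    ext o o'
    rw [Matrix.smul_mul, Matrix.smul_apply]
    match o, o' with
    | none, none => simp [Matrix.mul_apply, Matrix.one_apply, Aug, hm0]
    | none, some j =>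
      have h1 : (∑ l, (Aug f)ᵀ none l * Aug f l (some j)) = 0 := by
        simpa [Aug] using hf.1 j
      simp only [Matrix.smul_apply, Matrix.mul_apply, Matrix.one_apply, smul_eq_mul]
      rw [show (∑ x, (Aug f)ᵀ none x * Aug f x (some j)) = 0 from h1]
      simp
    | some j, none =>
      have h1 : (∑ l, (Aug f)ᵀ (some j) l * Aug f l none) = 0 := by
        simpa [Aug] using hf.1 j
      simp only [Matrix.smul_apply, Matrix.mul_apply, Matrix.one_apply, smul_eq_mul]
      rw [show (∑ x, (Aug f)ᵀ (some j) x * Aug f x none) = 0 from h1]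
      simp
    | some j, some j' =>
      have h2 := hf.2 j j'
      simp only [Matrix.mul_apply, Matrix.transpose_apply, Matrix.one_apply, Aug,
        Matrix.of_apply, Option.elim] at h2 ⊢
      by_cases h : j = j' <;> simp_all [h2, hm0]
  have hinj : Function.Injective (Aug f).mulVecLin := by
    have hcomp : ((m : ℝ)⁻¹ • (Aug f)ᵀ).mulVecLin ∘ₗ (Aug f).mulVecLin = LinearMap.id := by
      rw [← Matrix.mulVecLin_mul, hG, Matrix.mulVecLin_one]
    have h2 : ∀ v, ((m : ℝ)⁻¹ • (Aug f)ᵀ).mulVecLin ((Aug f).mulVecLin v) = v := by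
      intro v
      rw [← LinearMap.comp_apply, hcomp, LinearMap.id_apply]
    intro x y hxy
    rw [← h2 x, hxy, h2 y]
  constructor
  · exact hinj
  · rw [← LinearMap.injective_iff_surjective_of_finrank_eq_finrank (by
      rw [Module.finrank_pi, Module.finrank_pi]
      simp only [Fintype.card_option, Fintype.card_fin]
      omega)]
    exact hinj



section Main
variable {N n R : ℕ} {s : Fin n → ℕ}

/-- column sums of NOC interaction columns vanish -/
lemma intCol_sum_zero (hRn : R - 1 ≤ n) (hR : 2 ≤ R)
    (D : Fin N → ∀ i, Fin (s i)) (hD : hasStrength s D (R - 1)) (hs : ∀ i, 2 ≤ s i)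
    (C : ∀ i, Fin (s i) → Fin (s i - 1) → ℝ) (hC : ∀ i, isNOC (C i))
    {S : Finset (Fin n)} (hSne : S.Nonempty) (hScard : S.card ≤ R - 1)
    (j : ∀ i : S, Fin (s i.1 - 1)) :
    ∑ r, intCol C D S j r = 0 := by
  classical
  have hform : ∀ r, intCol C D S j r
      = ∏ a ∈ S, (fun a (l : Fin (s a)) =>
          if h : a ∈ S then C a l (j ⟨a, h⟩) else 1) a (D r a) := by
    intro r
    rw [intCol, prod_subtype_eq (fun i : S => C i.1 (D r i.1) (j i))]
  simp only [hform]
  obtain ⟨i₀, hi₀⟩ := hSne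
  exact sum_prod_eq_zero hRn D hD hs hScard
    (fun a (l : Fin (s a)) => if h : a ∈ S then C a l (j ⟨a, h⟩) else 1)
    ⟨i₀, hi₀, by simp only [dif_pos hi₀]; exact (hC i₀).1 _⟩

/-- single-factor column sums vanish -/
lemma col_sum_zero (hRn : R - 1 ≤ n) (hR : 2 ≤ R)
    (D : Fin N → ∀ i, Fin (s i)) (hD : hasStrength s D (R - 1)) (hs : ∀ i, 2 ≤ s i)
    (C : ∀ i, Fin (s i) → Fin (s i - 1) → ℝ) (hC : ∀ i, isNOC (C i))
    (c : Fin n) (j : Fin (s c - 1)) :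
    ∑ r, C c (D r c) j = 0 := by
  classical
  have hform : ∀ r, C c (D r c) j
      = ∏ a ∈ {c}, (fun a (l : Fin (s a)) =>
          if h : a = c then C c (h ▸ l) j else 1) a (D r a) := by
    intro r
    rw [Finset.prod_singleton]
    simp
  simp only [hform]
  exact sum_prod_eq_zero hRn D hD hs (S := {c}) (by simp; omega)
    (fun a (l : Fin (s a)) => if h : a = c then C c (h ▸ l) j else 1)
    ⟨c, Finset.mem_singleton_self c, by simp only [dif_pos rfl]; exact (hC c).1 j⟩

lemma Ymat_noc_raw (hRn : R - 1 ≤ n) (hR : 2 ≤ R)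
    (D : Fin N → ∀ i, Fin (s i)) (hD : hasStrength s D (R - 1)) (hs : ∀ i, 2 ≤ s i)
    (C : ∀ i, Fin (s i) → Fin (s i - 1) → ℝ) (hC : ∀ i, isNOC (C i)) (c : Fin n) :
    Ymat C D c = Matrix.of fun r j => C c (D r c) j := by
  ext r j
  simp [Ymat, center, col_sum_zero hRn hR D hD hs C hC c j]

lemma gramY (hRn : R - 1 ≤ n) (hR : 2 ≤ R)
    (D : Fin N → ∀ i, Fin (s i)) (hD : hasStrength s D (R - 1)) (hs : ∀ i, 2 ≤ s i)
    (C : ∀ i, Fin (s i) → Fin (s i - 1) → ℝ) (hC : ∀ i, isNOC (C i)) (c : Fin n) :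
    (Ymat C D c)ᵀ * Ymat C D c = (N : ℝ) • 1 := by
  classical
  rw [Ymat_noc_raw hRn hR D hD hs C hC c]
  ext j j'
  rw [Matrix.mul_apply]
  simp only [Matrix.transpose_apply, Matrix.of_apply, Matrix.smul_apply, Matrix.one_apply,
    smul_eq_mul]
  have hcard : ({c} : Finset (Fin n)).card ≤ R - 1 := by simp; omega
  have hform : ∀ r, C c (D r c) j * C c (D r c) j'
      = ∏ a ∈ {c}, (fun a (l : Fin (s a)) =>
          if h : a = c then C c (h ▸ l) j * C c (h ▸ l) j' else 1) a (D r a) := by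
    intro r; rw [Finset.prod_singleton]; simp
  by_cases h : j = j'
  · subst h
    simp only [if_pos rfl, mul_one, hform]
    have := sum_prod_eq_N hRn D hD hs (S := {c}) hcard
      (fun a (l : Fin (s a)) => if h : a = c then C c (h ▸ l) j * C c (h ▸ l) j else 1)
      (fun i hi => by
        rw [Finset.mem_singleton] at hi
        subst hi
        simp only [dif_pos rfl]
        simpa using (hC i).2 j j)
    simpa using this
  · simp only [if_neg h, mul_zero, hform]
    exact sum_prod_eq_zero hRn D hD hs (S := {c}) hcard
      (fun a (l : Fin (s a)) => if h : a = c then C c (h ▸ l) j * C c (h ▸ l) j' else 1)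
      ⟨c, Finset.mem_singleton_self c, by
        simp only [dif_pos rfl]
        simpa [h] using (hC c).2 j j'⟩

variable {U : Finset (Fin n)} {c : Fin n}

/-- merge a main-effect index and a `U.erase c` tuple into a `U` tuple -/
def mergeT (hc : c ∈ U) (a : Fin (s c - 1))
    (g : ∀ i : (U.erase c : Finset (Fin n)), Fin (s i.1 - 1)) : ∀ i : U, Fin (s i.1 - 1) :=
  fun i => if h : i.1 = c then cast (congrArg (fun x => Fin (s x - 1)) h.symm) a
    else g ⟨i.1, Finset.mem_erase.2 ⟨h, i.2⟩⟩

lemma mergeT_at_c (hc : c ∈ U) (a : Fin (s c - 1))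
    (g : ∀ i : (U.erase c : Finset (Fin n)), Fin (s i.1 - 1)) :
    mergeT hc a g ⟨c, hc⟩ = a := by
  simp only [mergeT, dif_pos rfl]
  rfl

lemma mergeT_ne (hc : c ∈ U) (a : Fin (s c - 1))
    (g : ∀ i : (U.erase c : Finset (Fin n)), Fin (s i.1 - 1)) (i : U) (h : i.1 ≠ c) :
    mergeT hc a g i = g ⟨i.1, Finset.mem_erase.2 ⟨h, i.2⟩⟩ := dif_neg h

def splitT (hc : c ∈ U) (jU : ∀ i : U, Fin (s i.1 - 1)) :
    Fin (s c - 1) × (∀ i : (U.erase c : Finset (Fin n)), Fin (s i.1 - 1)) :=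
  ⟨jU ⟨c, hc⟩, fun i => jU ⟨i.1, Finset.mem_of_mem_erase i.2⟩⟩

lemma merge_bijective (hc : c ∈ U) :
    Function.Bijective (fun p : Fin (s c - 1) × (∀ i : (U.erase c : Finset (Fin n)), Fin (s i.1 - 1)) =>
      mergeT hc p.1 p.2) := by
  rw [Function.bijective_iff_has_inverse]
  refine ⟨splitT hc, ?_, ?_⟩
  · rintro ⟨a, g⟩
    refine Prod.ext ?_ ?_
    · exact mergeT_at_c hc a g
    · funext i
      have hne : i.1 ≠ c := (Finset.mem_erase.1 i.2).1
      show mergeT hc a g ⟨i.1, _⟩ = g i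
      rw [mergeT_ne hc a g ⟨i.1, Finset.mem_of_mem_erase i.2⟩ hne]
  · intro jU
    funext i
    obtain ⟨iv, hiv⟩ := i
    show mergeT hc _ _ ⟨iv, hiv⟩ = jU ⟨iv, hiv⟩
    by_cases h : iv = c
    · subst h
      rw [show (⟨iv, hiv⟩ : {x // x ∈ U}) = ⟨iv, hc⟩ from Subtype.ext rfl,
        mergeT_at_c hc]
      rfl
    · rw [mergeT_ne hc _ _ ⟨iv, hiv⟩ h]
      rfl

lemma intCol_merge (C : ∀ i, Fin (s i) → Fin (s i - 1) → ℝ)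
    (D : Fin N → ∀ i, Fin (s i)) (hc : c ∈ U) (a : Fin (s c - 1))
    (g : ∀ i : (U.erase c : Finset (Fin n)), Fin (s i.1 - 1)) (r : Fin N) :
    intCol C D U (mergeT hc a g) r = C c (D r c) a * intCol C D (U.erase c) g r := by
  classical
  rw [intCol, prod_subtype_eq (fun i : U => C i.1 (D r i.1) (mergeT hc a g i))]
  rw [← Finset.mul_prod_erase U _ hc]
  congr 1
  · rw [dif_pos hc, mergeT_at_c hc a g]
  · rw [intCol, prod_subtype_eq (fun i : (U.erase c : Finset (Fin n)) => C i.1 (D r i.1) (g i))]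
    refine Finset.prod_congr rfl fun x hx => ?_
    have hxU : x ∈ U := Finset.mem_of_mem_erase hx
    have hxc : x ≠ c := (Finset.mem_erase.1 hx).1
    rw [dif_pos hxU, dif_pos hx, mergeT_ne hc a g ⟨x, hxU⟩ hxc]


/-! ### Option-tuple indexed full model matrices -/

variable (s) in
abbrev OT (V : Finset (Fin n)) : Type := ∀ i : V, Option (Fin (s i.1 - 1))

variable (s) in
def allNone (V : Finset (Fin n)) : OT s V := fun _ => none

def Fraw (f : ∀ i, Fin (s i) → Fin (s i - 1) → ℝ) (D : Fin N → ∀ i, Fin (s i))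
    (V : Finset (Fin n)) : Matrix (Fin N) (OT s V) ℝ :=
  Matrix.of fun r k => ∏ i : V, Aug (f i.1) (D r i.1) (k i)

def Wfull (T : ∀ i : Fin n, Matrix (Option (Fin (s i - 1))) (Option (Fin (s i - 1))) ℝ)
    (V : Finset (Fin n)) : Matrix (OT s V) (OT s V) ℝ :=
  Matrix.of fun k k' => ∏ i : V, T i.1 (k i) (k' i)

variable (s) in
def es (V : Finset (Fin n)) (x : FullIdx s V) : OT s V :=
  fun i => if h : i.1 ∈ x.1.1 then some (x.2 ⟨i.1, h⟩) else none

lemma es_ne_allNone {V : Finset (Fin n)} (x : FullIdx s V) : es s V x ≠ allNone s V := by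
  obtain ⟨i₀, hi₀⟩ := x.1.2.2
  intro h
  have := congrFun h ⟨i₀, x.1.2.1 hi₀⟩
  simp [es, allNone, hi₀] at this

lemma es_injective {V : Finset (Fin n)} : Function.Injective (es s V) := by
  rintro ⟨⟨S, hS⟩, jx⟩ ⟨⟨S', hS'⟩, jy⟩ h
  have hSS : S = S' := by
    ext a
    constructor
    · intro ha
      by_contra ha'
      have := congrFun h ⟨a, hS.1 ha⟩
      simp [es, ha, ha'] at this
    · intro ha
      by_contra ha'
      have := congrFun h ⟨a, hS'.1 ha⟩
      simp [es, ha, ha'] at this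
  subst hSS
  have hj : jx = jy := by
    funext i
    have := congrFun h ⟨i.1, hS.1 i.2⟩
    simp only [es] at this
    rw [dif_pos i.2, dif_pos i.2] at this
    have h2 := Option.some.inj this
    calc jx i = jx ⟨i.1, i.2⟩ := rfl
      _ = jy ⟨i.1, i.2⟩ := h2
      _ = jy i := rfl
  subst hj
  rfl

lemma EO_bijective {V : Finset (Fin n)} :
    Function.Bijective (fun o : Option (FullIdx s V) => o.elim (allNone s V) (es s V)) := by
  classical
  constructor
  · rintro (_ | x) (_ | y) h
    · rfl
    · exact absurd h.symm (es_ne_allNone y)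
    · exact absurd h (es_ne_allNone x)
    · exact congrArg some (es_injective h)
  · intro k
    by_cases hk : k = allNone s V
    · exact ⟨none, hk.symm⟩
    · have hex : ∃ i : V, k i ≠ none := by
        by_contra hall
        push_neg at hall
        exact hk (funext fun i => hall i)
      set S : Finset (Fin n) := (V.attach.filter (fun i => (k i).isSome)).image Subtype.val
        with hSdef
      have mem_S : ∀ a, a ∈ S ↔ ∃ h : a ∈ V, (k ⟨a, h⟩).isSome := by
        intro a
        simp only [hSdef, Finset.mem_image, Finset.mem_filter, Finset.mem_attach, true_and]
        constructor
        · rintro ⟨i, hi, rfl⟩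
          exact ⟨i.2, by simpa using hi⟩
        · rintro ⟨h, hsome⟩
          exact ⟨⟨a, h⟩, hsome, rfl⟩
      have hsub : S ⊆ V := by
        intro a ha
        exact ((mem_S a).1 ha).1
      have hne : S.Nonempty := by
        obtain ⟨i, hi⟩ := hex
        exact ⟨i.1, (mem_S i.1).2 ⟨i.2, by
          rw [Option.isSome_iff_ne_none]
          simpa using hi⟩⟩
      have hksome : ∀ (a : Fin n) (ha : a ∈ S), (k ⟨a, hsub ha⟩).isSome := by
        intro a ha
        obtain ⟨hv, hs'⟩ := (mem_S a).1 ha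
        exact hs'
      refine ⟨some ⟨⟨S, hsub, hne⟩, fun i => (k ⟨i.1, hsub i.2⟩).get (hksome i.1 i.2)⟩, ?_⟩
      funext i
      simp only [Option.elim, es]
      by_cases h : i.1 ∈ S
      · rw [dif_pos h]
        exact Option.some_get _
      · rw [dif_neg h]
        have : ¬ (k i).isSome := by
          intro hsome
          exact h ((mem_S i.1).2 ⟨i.2, by
            rwa [show (⟨i.1, i.2⟩ : {x // x ∈ V}) = i from Subtype.ext rfl]⟩)
        exact (Option.not_isSome_iff_eq_none.1 this).symm

lemma sum_OT {V : Finset (Fin n)} (F : OT s V → ℝ) :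
    ∑ k, F k = F (allNone s V) + ∑ x : FullIdx s V, F (es s V x) := by
  rw [← Fintype.sum_bijective _ (EO_bijective (V := V)) (fun o => F (o.elim (allNone s V) (es s V)))
    F (fun o => rfl)]
  rw [Fintype.sum_option]
  rfl

lemma Fraw_es (f : ∀ i, Fin (s i) → Fin (s i - 1) → ℝ) (D : Fin N → ∀ i, Fin (s i))
    {V : Finset (Fin n)} (x : FullIdx s V) (r : Fin N) :
    Fraw f D V r (es s V x) = intCol f D x.1.1 x.2 r := by
  classical
  have h1 : ∀ i : V, Aug (f i.1) (D r i.1) (es s V x i)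
      = if h : i.1 ∈ x.1.1 then f i.1 (D r i.1) (x.2 ⟨i.1, h⟩) else 1 := by
    intro i
    by_cases h : i.1 ∈ x.1.1
    · rw [dif_pos h]; simp only [es, dif_pos h]; rfl
    · rw [dif_neg h]; simp only [es, dif_neg h]; rfl
  rw [Fraw]
  show (∏ i : V, Aug (f i.1) (D r i.1) (es s V x i)) = _
  rw [Finset.prod_congr rfl (fun i _ => h1 i)]
  rw [prod_subtype_eq (fun i : V => if h : i.1 ∈ x.1.1 then f i.1 (D r i.1) (x.2 ⟨i.1, h⟩) else 1)]
  have h2 : ∀ a ∈ V, (if h : a ∈ V then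
        (if h' : a ∈ x.1.1 then f a (D r a) (x.2 ⟨a, h'⟩) else 1) else 1)
      = if h : a ∈ x.1.1 then f a (D r a) (x.2 ⟨a, h⟩) else 1 := by
    intro a ha
    rw [dif_pos ha]
  rw [Finset.prod_congr rfl h2, prod_dite_subset x.1.2.1
    (fun i : x.1.1 => f i.1 (D r i.1) (x.2 i))]
  rfl

lemma Fraw_allNone (f : ∀ i, Fin (s i) → Fin (s i - 1) → ℝ) (D : Fin N → ∀ i, Fin (s i))
    {V : Finset (Fin n)} (r : Fin N) :
    Fraw f D V r (allNone s V) = 1 := by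
  rw [Fraw]
  show (∏ i : V, Aug (f i.1) (D r i.1) none) = 1
  simp [Aug]

lemma Wfull_mul (T T' : ∀ i : Fin n, Matrix (Option (Fin (s i - 1))) (Option (Fin (s i - 1))) ℝ)
    (V : Finset (Fin n)) :
    Wfull T V * Wfull T' V = Wfull (fun i => T i * T' i) V := by
  classical
  ext k k''
  rw [Matrix.mul_apply, Wfull]
  show _ = ∏ i : V, (T i.1 * T' i.1) (k i) (k'' i)
  have : ∀ i : V, (T i.1 * T' i.1) (k i) (k'' i) = ∑ o, T i.1 (k i) o * T' i.1 o (k'' i) :=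
    fun i => Matrix.mul_apply
  rw [Finset.prod_congr rfl (fun i _ => this i)]
  rw [Finset.prod_univ_sum (fun _ => Finset.univ)
    (fun (i : V) (o : Option (Fin (s i.1 - 1))) => T i.1 (k i) o * T' i.1 o (k'' i))]
  rw [Fintype.piFinset_univ]
  refine Finset.sum_congr rfl fun k' _ => ?_
  rw [Finset.prod_mul_distrib]
  rfl

lemma Wfull_one (V : Finset (Fin n)) :
    Wfull (fun i => (1 : Matrix (Option (Fin (s i - 1))) (Option (Fin (s i - 1))) ℝ)) V = 1 := by
  classical
  ext k k'
  rw [Wfull]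
  show (∏ i : V, (1 : Matrix _ _ ℝ) (k i) (k' i)) = (1 : Matrix (OT s V) (OT s V) ℝ) k k'
  by_cases h : k = k'
  · subst h
    simp [Matrix.one_apply]
  · rw [Matrix.one_apply_ne h]
    obtain ⟨i, hi⟩ := Function.ne_iff.1 h
    exact Finset.prod_eq_zero (Finset.mem_univ i) (Matrix.one_apply_ne hi)

lemma XmatC_raw (hRn : R - 1 ≤ n) (hR : 2 ≤ R)
    (D : Fin N → ∀ i, Fin (s i)) (hD : hasStrength s D (R - 1)) (hs : ∀ i, 2 ≤ s i)
    (C : ∀ i, Fin (s i) → Fin (s i - 1) → ℝ) (hC : ∀ i, isNOC (C i))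
    {V : Finset (Fin n)} (hV : V.card ≤ R - 1) :
    Xmat C D V = Matrix.of fun r (x : FullIdx s V) => intCol C D x.1.1 x.2 r := by
  ext r x
  have h0 : ∑ r', intCol C D x.1.1 x.2 r' = 0 :=
    intCol_sum_zero hRn hR D hD hs C hC x.1.2.2
      (le_trans (Finset.card_le_card x.1.2.1) hV) x.2
  simp [Xmat, center, h0]

lemma gramX (hRn : R - 1 ≤ n) (hR : 2 ≤ R)
    (D : Fin N → ∀ i, Fin (s i)) (hD : hasStrength s D (R - 1)) (hs : ∀ i, 2 ≤ s i)
    (C : ∀ i, Fin (s i) → Fin (s i - 1) → ℝ) (hC : ∀ i, isNOC (C i))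
    {V : Finset (Fin n)} (hV : V.card ≤ R - 1) :
    (Xmat C D V)ᵀ * Xmat C D V = (N : ℝ) • 1 := by
  classical
  rw [XmatC_raw hRn hR D hD hs C hC hV]
  ext x y
  rw [Matrix.mul_apply]
  simp only [Matrix.transpose_apply, Matrix.of_apply, Matrix.smul_apply, Matrix.one_apply,
    smul_eq_mul]
  obtain ⟨⟨S, hS⟩, jx⟩ := x
  obtain ⟨⟨S', hS'⟩, jy⟩ := y
  have hform : ∀ r, intCol C D S jx r * intCol C D S' jy r
      = ∏ a ∈ S ∪ S',
          ((if h : a ∈ S then C a (D r a) (jx ⟨a, h⟩) else 1) *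
           (if h : a ∈ S' then C a (D r a) (jy ⟨a, h⟩) else 1)) := by
    intro r
    rw [Finset.prod_mul_distrib,
      prod_dite_subset (Finset.subset_union_left : S ⊆ S ∪ S')
        (fun i : S => C i.1 (D r i.1) (jx i)),
      prod_dite_subset (Finset.subset_union_right : S' ⊆ S ∪ S')
        (fun i : S' => C i.1 (D r i.1) (jy i))]
    rfl
  have hcard : (S ∪ S').card ≤ R - 1 :=
    le_trans (Finset.card_le_card (Finset.union_subset hS.1 hS'.1)) hV
  simp only [hform]
  by_cases hSS : S = S'
  · subst hSS
    by_cases hj : jx = jy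
    · subst hj
      rw [if_pos rfl, mul_one]
      refine sum_prod_eq_N hRn D hD hs hcard
        (fun a (l : Fin (s a)) =>
          (if h : a ∈ S then C a l (jx ⟨a, h⟩) else 1) *
          (if h : a ∈ S then C a l (jx ⟨a, h⟩) else 1)) ?_
      intro a ha
      rw [Finset.union_self] at ha
      simp only [dif_pos ha]
      simpa using (hC a).2 (jx ⟨a, ha⟩) (jx ⟨a, ha⟩)
    · have hne : (⟨⟨S, hS⟩, jx⟩ : FullIdx s V) ≠ ⟨⟨S, hS'⟩, jy⟩ := by
        intro h
        exact hj (eq_of_heq (Sigma.mk.inj_iff.1 h).2)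
      rw [if_neg hne, mul_zero]
      obtain ⟨i, hi⟩ := Function.ne_iff.1 hj
      refine sum_prod_eq_zero hRn D hD hs hcard
        (fun a (l : Fin (s a)) =>
          (if h : a ∈ S then C a l (jx ⟨a, h⟩) else 1) *
          (if h : a ∈ S then C a l (jy ⟨a, h⟩) else 1))
        ⟨i.1, Finset.mem_union_left _ i.2, ?_⟩
      simp only [dif_pos i.2]
      have hCeq := (hC i.1).2 (jx ⟨i.1, i.2⟩) (jy ⟨i.1, i.2⟩)
      have hnei : jx ⟨i.1, i.2⟩ ≠ jy ⟨i.1, i.2⟩ := hi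
      rw [if_neg hnei] at hCeq
      exact hCeq
  · have hne : (⟨⟨S, hS⟩, jx⟩ : FullIdx s V) ≠ ⟨⟨S', hS'⟩, jy⟩ := by
      intro h
      exact hSS (congrArg (fun z => z.1.1) h)
    rw [if_neg hne, mul_zero]
    have hwit : ∃ a, (a ∈ S ∧ a ∉ S') ∨ (a ∈ S' ∧ a ∉ S) := by
      by_contra hall
      push_neg at hall
      exact hSS (Finset.ext fun a => ⟨fun ha => (hall a).1 ha, fun ha => (hall a).2 ha⟩)
    obtain ⟨a, ha⟩ := hwit
    rcases ha with ⟨haS, haS'⟩ | ⟨haS', haS⟩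
    · refine sum_prod_eq_zero hRn D hD hs hcard
        (fun a (l : Fin (s a)) =>
          (if h : a ∈ S then C a l (jx ⟨a, h⟩) else 1) *
          (if h : a ∈ S' then C a l (jy ⟨a, h⟩) else 1))
        ⟨a, Finset.mem_union_left _ haS, ?_⟩
      simp only [dif_pos haS, dif_neg haS', mul_one]
      exact (hC a).1 _
    · refine sum_prod_eq_zero hRn D hD hs hcard
        (fun a (l : Fin (s a)) =>
          (if h : a ∈ S then C a l (jx ⟨a, h⟩) else 1) *
          (if h : a ∈ S' then C a l (jy ⟨a, h⟩) else 1))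
        ⟨a, Finset.mem_union_right _ haS', ?_⟩
      simp only [dif_pos haS', dif_neg haS, one_mul]
      exact (hC a).1 _

lemma crossZero (hRn : R - 1 ≤ n) (hR : 2 ≤ R)
    (D : Fin N → ∀ i, Fin (s i)) (hD : hasStrength s D (R - 1)) (hs : ∀ i, 2 ≤ s i)
    (C : ∀ i, Fin (s i) → Fin (s i - 1) → ℝ) (hC : ∀ i, isNOC (C i))
    {V : Finset (Fin n)} {c : Fin n} (hcV : c ∉ V) (hVcard : V.card = R - 1)
    (x : FullIdx s V) (hx : x.1.1 ≠ V) (j : Fin (s c - 1)) :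
    ∑ r, C c (D r c) j * intCol C D x.1.1 x.2 r = 0 := by
  classical
  obtain ⟨⟨S, hSsub, hSne⟩, jx⟩ := x
  simp only at hx ⊢
  have hcS : c ∉ S := fun h => hcV (hSsub h)
  have hcard : (insert c S).card ≤ R - 1 := by
    rw [Finset.card_insert_of_notMem hcS]
    have : S.card < V.card := Finset.card_lt_card (lt_of_le_of_ne hSsub hx)
    omega
  have hform : ∀ r, C c (D r c) j * intCol C D S jx r
      = ∏ a ∈ insert c S,
          (if h : a = c then C c (h ▸ D r a) j
           else if h : a ∈ S then C a (D r a) (jx ⟨a, h⟩) else 1) := by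
    intro r
    rw [Finset.prod_insert hcS]
    congr 1
    · rw [dif_pos rfl]
    · have h1 : intCol C D S jx r
          = ∏ a ∈ S, (if h : a ∈ S then C a (D r a) (jx ⟨a, h⟩) else 1) :=
        (prod_dite_subset (Finset.Subset.refl S)
          (fun i : S => C i.1 (D r i.1) (jx i))).symm
      rw [h1]
      refine Finset.prod_congr rfl fun a ha => ?_
      rw [dif_neg (fun h : a = c => hcS (h ▸ ha))]
  simp only [hform]
  refine sum_prod_eq_zero hRn D hD hs hcard
    (fun a (l : Fin (s a)) =>
      if h : a = c then C c (h ▸ l) j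
      else if h : a ∈ S then C a l (jx ⟨a, h⟩) else 1)
    ⟨c, Finset.mem_insert_self c S, ?_⟩
  simp only [dif_pos rfl]
  exact (hC c).1 j

/-! ### transformation matrices between the two codings -/

variable (C B : ∀ i, Fin (s i) → Fin (s i - 1) → ℝ)

noncomputable def TT (hs : ∀ i, 2 ≤ s i) (hC : ∀ i, isNOC (C i)) (i : Fin n) :
    Matrix (Option (Fin (s i - 1))) (Option (Fin (s i - 1))) ℝ :=
  minv (Aug (C i)) (Aug_bijective (hs i) (hC i)) * Aug (B i)

variable {hs : ∀ i, 2 ≤ s i} {hC : ∀ i, isNOC (C i)}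

lemma AugC_mul_TT (i : Fin n) : Aug (C i) * TT C B hs hC i = Aug (B i) := by
  rw [TT, ← Matrix.mul_assoc, mul_minv, Matrix.one_mul]

lemma TT_none (i : Fin n) (o : Option (Fin (s i - 1))) :
    TT C B hs hC i o none = if o = none then 1 else 0 := by
  have h1 : TT C B hs hC i o none
      = ∑ o', minv (Aug (C i)) (Aug_bijective (hs i) (hC i)) o o' * Aug (C i) o' none := by
    rw [TT, Matrix.mul_apply]
    exact Finset.sum_congr rfl fun o' _ => rfl
  rw [h1, ← Matrix.mul_apply, minv_mul, Matrix.one_apply]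

lemma TT_bijective (hBbij : ∀ i, Function.Bijective (Aug (B i)).mulVecLin) (i : Fin n) :
    Function.Bijective (TT C B hs hC i).mulVecLin := by
  rw [TT, Matrix.mulVecLin_mul]
  rw [LinearMap.coe_comp]
  apply Function.Bijective.comp
  · have h : (minv (Aug (C i)) (Aug_bijective (hs i) (hC i))).mulVecLin
        = ((LinearEquiv.ofBijective (Aug (C i)).mulVecLin (Aug_bijective (hs i) (hC i))).symm :
            (Fin (s i) → ℝ) →ₗ[ℝ] (Option (Fin (s i - 1)) → ℝ)) := Matrix.toLin'_toMatrix' _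
    rw [h]
    exact (LinearEquiv.ofBijective (Aug (C i)).mulVecLin (Aug_bijective (hs i) (hC i))).symm.bijective
  · exact hBbij i

lemma TT_isUnit_det (hBbij : ∀ i, Function.Bijective (Aug (B i)).mulVecLin) (i : Fin n) :
    IsUnit (TT C B hs hC i).det := by
  rw [← Matrix.isUnit_iff_isUnit_det]
  rw [← Matrix.mulVec_surjective_iff_isUnit]
  exact (TT_bijective C B hBbij i).surjective

noncomputable def Ty (c : Fin n) : Matrix (Fin (s c - 1)) (Fin (s c - 1)) ℝ :=
  Matrix.of fun j j' => TT C B hs hC c (some j) (some j')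

lemma B_expand (c : Fin n) (l : Fin (s c)) (j : Fin (s c - 1)) :
    B c l j = TT C B hs hC c none (some j)
      + ∑ j', C c l j' * TT C B hs hC c (some j') (some j) := by
  have h : (Aug (C c) * TT C B hs hC c) l (some j) = Aug (B c) l (some j) := by
    rw [AugC_mul_TT]
  rw [Matrix.mul_apply, Fintype.sum_option] at h
  have h2 : Aug (B c) l (some j) = B c l j := rfl
  have h3 : Aug (C c) l none = 1 := rfl
  rw [h2, h3, one_mul] at h
  rw [← h]
  rfl

lemma Yfact (hN : 1 ≤ N) (hRn : R - 1 ≤ n) (hR : 2 ≤ R)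
    (D : Fin N → ∀ i, Fin (s i)) (hD : hasStrength s D (R - 1)) (c : Fin n) :
    Ymat B D c = Ymat C D c * Ty C B (hs := hs) (hC := hC) c := by
  have hN0 : (N : ℝ) ≠ 0 := by positivity
  rw [Ymat_noc_raw hRn hR D hD hs C hC c]
  ext r j
  have hsum : ∑ r', B c (D r' c) j = N * TT C B hs hC c none (some j) := by
    simp only [B_expand C B (hs := hs) (hC := hC) c]
    rw [Finset.sum_add_distrib, Finset.sum_const, Finset.card_univ, Fintype.card_fin,
      nsmul_eq_mul, Finset.sum_comm]
    have : ∀ j', ∑ r', C c (D r' c) j' * TT C B hs hC c (some j') (some j) = 0 := by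
      intro j'
      rw [← Finset.sum_mul, col_sum_zero hRn hR D hD hs C hC c j', zero_mul]
    rw [Finset.sum_congr rfl fun j' _ => this j', Finset.sum_const, smul_zero, add_zero]
  show B c (D r c) j - (∑ r', B c (D r' c) j) / N
      = ∑ j', (Matrix.of fun r j => C c (D r c) j) r j' * Ty C B (hs := hs) (hC := hC) c j' j
  rw [hsum, mul_div_cancel_left₀ _ hN0, B_expand C B (hs := hs) (hC := hC) c, add_sub_cancel_left]
  rfl

lemma Ty_mul_inv (hBbij : ∀ i, Function.Bijective (Aug (B i)).mulVecLin) (c : Fin n) :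
    Ty C B (hs := hs) (hC := hC) c *
      (Matrix.of fun j j' => (TT C B hs hC c)⁻¹ (some j) (some j')) = 1 := by
  ext j j''
  rw [Matrix.mul_apply]
  have hfull : ∑ o, TT C B hs hC c (some j) o * (TT C B hs hC c)⁻¹ o (some j'')
      = (1 : Matrix (Option (Fin (s c - 1))) (Option (Fin (s c - 1))) ℝ) (some j) (some j'') := by
    rw [← Matrix.mul_apply, Matrix.mul_nonsing_inv _ (TT_isUnit_det C B hBbij c)]
  rw [Fintype.sum_option, TT_none, if_neg (by simp), zero_mul, zero_add] at hfull
  have : ∑ j', Ty C B (hs := hs) (hC := hC) c j j' *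
      (Matrix.of fun j j' => (TT C B hs hC c)⁻¹ (some j) (some j')) j' j''
      = ∑ j', TT C B hs hC c (some j) (some j') * (TT C B hs hC c)⁻¹ (some j') (some j'') :=
    Finset.sum_congr rfl fun j' _ => rfl
  rw [this, hfull, Matrix.one_apply, Matrix.one_apply]
  by_cases h : j = j'' <;> simp [h]

lemma Ty_isUnit_det (hBbij : ∀ i, Function.Bijective (Aug (B i)).mulVecLin) (c : Fin n) :
    IsUnit (Ty C B (hs := hs) (hC := hC) c).det :=
  IsUnit.of_mul_eq_one _ (by
    rw [← Matrix.det_mul, Ty_mul_inv C B hBbij c, Matrix.det_one])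

lemma FrawBC (D : Fin N → ∀ i, Fin (s i)) (V : Finset (Fin n)) :
    Fraw B D V = Fraw C D V * Wfull (TT C B hs hC) V := by
  classical
  ext r k'
  rw [Matrix.mul_apply]
  have h1 : ∀ k : OT s V, Fraw C D V r k * Wfull (TT C B hs hC) V k k'
      = ∏ i : V, (Aug (C i.1) (D r i.1) (k i) * TT C B hs hC i.1 (k i) (k' i)) := by
    intro k
    show (∏ i : V, Aug (C i.1) (D r i.1) (k i)) *
        (∏ i : V, TT C B hs hC i.1 (k i) (k' i)) = _
    rw [← Finset.prod_mul_distrib]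
  rw [Finset.sum_congr rfl fun k _ => h1 k]
  rw [← Fintype.piFinset_univ, ← Finset.prod_univ_sum (fun _ => Finset.univ)
    (fun (i : V) (o : Option (Fin (s i.1 - 1))) =>
      Aug (C i.1) (D r i.1) o * TT C B hs hC i.1 o (k' i))]
  have h2 : ∀ i : V, (∑ o, Aug (C i.1) (D r i.1) o * TT C B hs hC i.1 o (k' i))
      = Aug (B i.1) (D r i.1) (k' i) := by
    intro i
    rw [← Matrix.mul_apply, AugC_mul_TT]
  rw [Finset.prod_congr rfl fun i _ => h2 i]
  rfl

noncomputable def Wm (V : Finset (Fin n)) : Matrix (FullIdx s V) (FullIdx s V) ℝ :=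
  Matrix.of fun x y => Wfull (TT C B hs hC) V (es s V x) (es s V y)

lemma Xfact (hN : 1 ≤ N) (hRn : R - 1 ≤ n) (hR : 2 ≤ R)
    (D : Fin N → ∀ i, Fin (s i)) (hD : hasStrength s D (R - 1))
    {V : Finset (Fin n)} (hV : V.card ≤ R - 1) :
    Xmat B D V = Xmat C D V * Wm C B (hs := hs) (hC := hC) V := by
  classical
  have hN0 : (N : ℝ) ≠ 0 := by positivity
  rw [XmatC_raw hRn hR D hD hs C hC hV]
  ext r x
  have key : ∀ r', intCol B D x.1.1 x.2 r'
      = Wfull (TT C B hs hC) V (allNone s V) (es s V x)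
        + ∑ y : FullIdx s V,
            intCol C D y.1.1 y.2 r' * Wfull (TT C B hs hC) V (es s V y) (es s V x) := by
    intro r'
    rw [← Fraw_es B D x r', FrawBC C B (hs := hs) (hC := hC) D V, Matrix.mul_apply,
      sum_OT (fun k => Fraw C D V r' k * Wfull (TT C B hs hC) V k (es s V x)),
      Fraw_allNone, one_mul]
    congr 1
    exact Finset.sum_congr rfl fun y _ => by rw [Fraw_es]
  have hsum : ∑ r', intCol B D x.1.1 x.2 r'
      = N * Wfull (TT C B hs hC) V (allNone s V) (es s V x) := by
    simp only [key]
    rw [Finset.sum_add_distrib, Finset.sum_const, Finset.card_univ, Fintype.card_fin,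
      nsmul_eq_mul, Finset.sum_comm]
    have hz : ∀ y : FullIdx s V,
        ∑ r', intCol C D y.1.1 y.2 r' * Wfull (TT C B hs hC) V (es s V y) (es s V x) = 0 := by
      intro y
      rw [← Finset.sum_mul,
        intCol_sum_zero hRn hR D hD hs C hC y.1.2.2
          (le_trans (Finset.card_le_card y.1.2.1) hV) y.2, zero_mul]
    rw [Finset.sum_congr rfl fun y _ => hz y, Finset.sum_const, smul_zero, add_zero]
  show intCol B D x.1.1 x.2 r - (∑ r', intCol B D x.1.1 x.2 r') / N = _
  rw [hsum, mul_div_cancel_left₀ _ hN0, key r, add_sub_cancel_left, Matrix.mul_apply]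
  rfl

lemma Wfull_allNone_col (hBbij : ∀ i, Function.Bijective (Aug (B i)).mulVecLin)
    {V : Finset (Fin n)} (x : FullIdx s V) :
    Wfull (TT C B hs hC) V (es s V x) (allNone s V) = 0 := by
  obtain ⟨i₀, hi₀⟩ := x.1.2.2
  refine Finset.prod_eq_zero (Finset.mem_univ (⟨i₀, x.1.2.1 hi₀⟩ : V)) ?_
  rw [show allNone s V (⟨i₀, x.1.2.1 hi₀⟩ : V) = none from rfl, TT_none, if_neg]
  simp [es, hi₀]

lemma Wm_mul_inv (hBbij : ∀ i, Function.Bijective (Aug (B i)).mulVecLin)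
    {V : Finset (Fin n)} :
    Wm C B (hs := hs) (hC := hC) V *
      (Matrix.of fun x y => Wfull (fun i => (TT C B hs hC i)⁻¹) V (es s V x) (es s V y)) = 1 := by
  classical
  ext x z
  rw [Matrix.mul_apply]
  have h1 : ∑ y : FullIdx s V, Wm C B (hs := hs) (hC := hC) V x y *
      (Matrix.of fun x y => Wfull (fun i => (TT C B hs hC i)⁻¹) V (es s V x) (es s V y)) y z
      = ∑ y : FullIdx s V, Wfull (TT C B hs hC) V (es s V x) (es s V y) *
          Wfull (fun i => (TT C B hs hC i)⁻¹) V (es s V y) (es s V z) :=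
    Finset.sum_congr rfl fun y _ => rfl
  have hfull : ∑ k : OT s V, Wfull (TT C B hs hC) V (es s V x) k *
      Wfull (fun i => (TT C B hs hC i)⁻¹) V k (es s V z)
      = (1 : Matrix (OT s V) (OT s V) ℝ) (es s V x) (es s V z) := by
    rw [← Matrix.mul_apply, Wfull_mul]
    have : (fun i => TT C B hs hC i * (TT C B hs hC i)⁻¹)
        = fun i : Fin n => (1 : Matrix (Option (Fin (s i - 1))) (Option (Fin (s i - 1))) ℝ) := by
      funext i
      rw [Matrix.mul_nonsing_inv _ (TT_isUnit_det C B hBbij i)]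
    rw [this, Wfull_one]
  rw [sum_OT (fun k => Wfull (TT C B hs hC) V (es s V x) k *
    Wfull (fun i => (TT C B hs hC i)⁻¹) V k (es s V z)),
    Wfull_allNone_col C B hBbij x, zero_mul, zero_add] at hfull
  rw [h1, hfull, Matrix.one_apply, Matrix.one_apply]
  by_cases h : x = z
  · subst h; rw [if_pos rfl, if_pos rfl]
  · rw [if_neg h, if_neg (fun he => h (es_injective he))]

lemma Wm_isUnit_det (hBbij : ∀ i, Function.Bijective (Aug (B i)).mulVecLin)
    {V : Finset (Fin n)} :
    IsUnit (Wm C B (hs := hs) (hC := hC) V).det :=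
  IsUnit.of_mul_eq_one _ (by
    rw [← Matrix.det_mul, Wm_mul_inv C B hBbij, Matrix.det_one])

lemma trace_MMT {ι κ : Type} [Fintype ι] [Fintype κ] (M : Matrix ι κ ℝ) :
    (M * Mᵀ).trace = ∑ j, ∑ x, (M j x) ^ 2 := by
  rw [Matrix.trace]
  refine Finset.sum_congr rfl fun j _ => ?_
  rw [Matrix.diag_apply, Matrix.mul_apply]
  exact Finset.sum_congr rfl fun x _ => by rw [Matrix.transpose_apply, sq]

lemma trace_reduce {N : ℕ} {ι κ : Type} [Fintype ι] [Fintype κ] [DecidableEq ι] [DecidableEq κ]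
    (Y : Matrix (Fin N) ι ℝ) (X : Matrix (Fin N) κ ℝ) (T : Matrix ι ι ℝ) (W : Matrix κ κ ℝ)
    {ν : ℝ} (hν : ν ≠ 0) (hT : IsUnit T.det) (hW : IsUnit W.det)
    (hGY : Yᵀ * Y = ν • 1) (hGX : Xᵀ * X = ν • 1) :
    Matrix.trace (((Y * T)ᵀ * (Y * T))⁻¹ * ((Y * T)ᵀ * (X * W)) *
        ((X * W)ᵀ * (X * W))⁻¹ * ((X * W)ᵀ * (Y * T)))
      = ν⁻¹ * (ν⁻¹ * Matrix.trace ((Yᵀ * X) * (Yᵀ * X)ᵀ)) := by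
  have hTt : IsUnit Tᵀ.det := by rwa [Matrix.det_transpose]
  have hWt : IsUnit Wᵀ.det := by rwa [Matrix.det_transpose]
  have hinv1 : (ν • (1 : Matrix ι ι ℝ))⁻¹ = ν⁻¹ • 1 :=
    Matrix.inv_eq_right_inv (by
      rw [Matrix.smul_mul, Matrix.mul_smul, Matrix.one_mul, smul_smul,
        mul_inv_cancel₀ hν, one_smul])
  have hinv2 : (ν • (1 : Matrix κ κ ℝ))⁻¹ = ν⁻¹ • 1 :=
    Matrix.inv_eq_right_inv (by
      rw [Matrix.smul_mul, Matrix.mul_smul, Matrix.one_mul, smul_smul,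
        mul_inv_cancel₀ hν, one_smul])
  have e1 : (Y * T)ᵀ * (Y * T) = Tᵀ * ((ν • 1) * T) := by
    rw [Matrix.transpose_mul, Matrix.mul_assoc, ← Matrix.mul_assoc Yᵀ Y T, hGY]
  have e2 : (X * W)ᵀ * (X * W) = Wᵀ * ((ν • 1) * W) := by
    rw [Matrix.transpose_mul, Matrix.mul_assoc, ← Matrix.mul_assoc Xᵀ X W, hGX]
  have e3 : ((Y * T)ᵀ * (Y * T))⁻¹ = T⁻¹ * (ν⁻¹ • 1) * (Tᵀ)⁻¹ := by
    rw [e1, Matrix.mul_inv_rev, Matrix.mul_inv_rev, hinv1]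
  have e4 : ((X * W)ᵀ * (X * W))⁻¹ = W⁻¹ * (ν⁻¹ • 1) * (Wᵀ)⁻¹ := by
    rw [e2, Matrix.mul_inv_rev, Matrix.mul_inv_rev, hinv2]
  have e5 : (Y * T)ᵀ * (X * W) = Tᵀ * ((Yᵀ * X) * W) := by
    rw [Matrix.transpose_mul, Matrix.mul_assoc, ← Matrix.mul_assoc Yᵀ X W]
  have e6 : (X * W)ᵀ * (Y * T) = Wᵀ * ((Xᵀ * Y) * T) := by
    rw [Matrix.transpose_mul, Matrix.mul_assoc, ← Matrix.mul_assoc Xᵀ Y T]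
  rw [e3, e4, e5, e6]
  simp only [Matrix.mul_assoc]
  rw [Matrix.nonsing_inv_mul_cancel_left _ _ hTt,
    Matrix.mul_nonsing_inv_cancel_left _ _ hW,
    Matrix.nonsing_inv_mul_cancel_left _ _ hWt]
  simp only [Matrix.smul_mul, Matrix.mul_smul, Matrix.one_mul]
  rw [Matrix.trace_smul, Matrix.trace_smul, smul_eq_mul, smul_eq_mul]
  congr 1
  congr 1
  rw [show (Yᵀ * X)ᵀ = Xᵀ * Y by rw [Matrix.transpose_mul, Matrix.transpose_transpose]]
  simp only [← Matrix.mul_assoc]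
  rw [Matrix.trace_mul_cycle (T⁻¹ * Yᵀ * X * Xᵀ) Y T]
  simp only [← Matrix.mul_assoc]
  rw [Matrix.mul_nonsing_inv _ hT, Matrix.one_mul]

end Main

end St6

/-- for an arbitrary (invertible) coding `B`, the sum of the squared
canonical correlations between the centered main-effects matrix `Y` of `c` and the
centered nonconstant full-model columns `X` of `C = U \ {c}` — namely
`tr(S_yy⁻¹ S_yx S_xx⁻¹ S_xy)` — equals the projection frequency `a_R(U)` computed from
the normalized orthogonal codings. -/
theorem statement6 {N n R : ℕ} (hN : 1 ≤ N) (hR : 2 ≤ R) (hn : R ≤ n)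
    {s : Fin n → ℕ} (hs : ∀ i, 2 ≤ s i)
    (D : Fin N → ∀ i, Fin (s i)) (hD : hasStrength s D (R - 1))
    (C : ∀ i, Fin (s i) → Fin (s i - 1) → ℝ) (hC : ∀ i, isNOC (C i))
    (U : Finset (Fin n)) (hU : U.card = R) (c : Fin n) (hc : c ∈ U)
    (B : ∀ i, Fin (s i) → Fin (s i - 1) → ℝ)
    (hB : ∀ i : Fin n, Function.Bijective
      ((Matrix.of fun (l : Fin (s i)) (o : Option (Fin (s i - 1))) =>
        o.elim 1 fun j => B i l j).mulVecLin))
    (hYY : IsUnit ((Ymat B D c)ᵀ * Ymat B D c).det)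
    (hXX : IsUnit ((Xmat B D (U.erase c))ᵀ * Xmat B D (U.erase c)).det) :
    Matrix.trace
        (((Ymat B D c)ᵀ * Ymat B D c)⁻¹ * ((Ymat B D c)ᵀ * Xmat B D (U.erase c)) *
          ((Xmat B D (U.erase c))ᵀ * Xmat B D (U.erase c))⁻¹ *
          ((Xmat B D (U.erase c))ᵀ * Ymat B D c))
      = projFreq C D U := by
  classical
  have hRn : R - 1 ≤ n := by omega
  have hN0 : (N : ℝ) ≠ 0 := by positivity
  have hB' : ∀ i, Function.Bijective (St6.Aug (B i)).mulVecLin := hB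
  have hcCs : c ∉ U.erase c := Finset.notMem_erase c U
  have hCcard : (U.erase c).card = R - 1 := by rw [Finset.card_erase_of_mem hc, hU]
  have hVle : (U.erase c).card ≤ R - 1 := le_of_eq hCcard
  have hCne : (U.erase c).Nonempty := by
    rw [← Finset.card_pos, hCcard]; omega
  have hYf := St6.Yfact C B (hs := hs) (hC := hC) hN hRn hR D hD c
  have hXf := St6.Xfact C B (hs := hs) (hC := hC) hN hRn hR D hD hVle
  have hGY := St6.gramY hRn hR D hD hs C hC c
  have hGX := St6.gramX hRn hR D hD hs C hC hVle
  have uTy := St6.Ty_isUnit_det C B (hs := hs) (hC := hC) hB' c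
  have uWm := St6.Wm_isUnit_det C B (hs := hs) (hC := hC) hB' (V := U.erase c)
  rw [hYf, hXf]
  rw [St6.trace_reduce (Ymat C D c) (Xmat C D (U.erase c)) _ _ hN0 uTy uWm hGY hGX]
  have hE : (Ymat C D c)ᵀ * Xmat C D (U.erase c)
      = Matrix.of (fun (j : Fin (s c - 1)) (x : FullIdx s (U.erase c)) =>
          ∑ r, C c (D r c) j * intCol C D x.1.1 x.2 r) := by
    rw [St6.Ymat_noc_raw hRn hR D hD hs C hC c, St6.XmatC_raw hRn hR D hD hs C hC hVle]
    ext j x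
    rw [Matrix.mul_apply]
    rfl
  rw [hE, St6.trace_MMT]
  have hsum1 : ∀ j : Fin (s c - 1),
      (∑ x : FullIdx s (U.erase c),
        ((Matrix.of (fun (j : Fin (s c - 1)) (x : FullIdx s (U.erase c)) =>
          ∑ r, C c (D r c) j * intCol C D x.1.1 x.2 r)) j x) ^ 2)
      = ∑ g : (∀ i : (U.erase c : Finset (Fin n)), Fin (s i.1 - 1)),
          (∑ r, intCol C D U (St6.mergeT hc j g) r) ^ 2 := by
    intro j
    rw [← Finset.univ_sigma_univ, Finset.sum_sigma]
    rw [Finset.sum_eq_single_of_mem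
      (⟨U.erase c, Finset.Subset.refl _, hCne⟩ : {S : Finset (Fin n) // S ⊆ U.erase c ∧ S.Nonempty})
      (Finset.mem_univ _)
      (fun S _ hS => Finset.sum_eq_zero fun g _ => by
        have h0 := St6.crossZero hRn hR D hD hs C hC hcCs hCcard ⟨S, g⟩
          (fun h => hS (Subtype.ext h)) j
        show (∑ r, C c (D r c) j * intCol C D S.1 g r) ^ 2 = 0
        rw [show (∑ r, C c (D r c) j * intCol C D S.1 g r) = 0 from h0]
        norm_num)]
    refine Finset.sum_congr rfl fun g _ => ?_
    congr 1
    show (∑ r, C c (D r c) j * intCol C D (U.erase c) g r) = _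
    exact Finset.sum_congr rfl fun r _ => (St6.intCol_merge C D hc j g r).symm
  rw [Finset.sum_congr rfl (fun j _ => hsum1 j)]
  have hmerge : (∑ j : Fin (s c - 1),
      ∑ g : (∀ i : (U.erase c : Finset (Fin n)), Fin (s i.1 - 1)),
        (∑ r, intCol C D U (St6.mergeT hc j g) r) ^ 2)
      = ∑ jU : (∀ i : U, Fin (s i.1 - 1)), (∑ r, intCol C D U jU r) ^ 2 := by
    have h1 : (∑ p : Fin (s c - 1) × (∀ i : (U.erase c : Finset (Fin n)), Fin (s i.1 - 1)),
        (∑ r, intCol C D U (St6.mergeT hc p.1 p.2) r) ^ 2)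
        = ∑ j : Fin (s c - 1),
            ∑ g : (∀ i : (U.erase c : Finset (Fin n)), Fin (s i.1 - 1)),
              (∑ r, intCol C D U (St6.mergeT hc j g) r) ^ 2 :=
      Fintype.sum_prod_type (fun p => (∑ r, intCol C D U (St6.mergeT hc p.1 p.2) r) ^ 2)
    rw [← h1]
    exact Fintype.sum_bijective _ (St6.merge_bijective hc)
      (fun p => (∑ r, intCol C D U (St6.mergeT hc p.1 p.2) r) ^ 2)
      (fun jU => (∑ r, intCol C D U jU r) ^ 2) (fun p => rfl)
  rw [hmerge, projFreq]
  rw [pow_two, div_eq_mul_inv, mul_inv]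
  ring
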